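/- For every letter-thin triple (x₁,x₂,x₃): η₀(x₁) + η₀(x₂) + η₀(x₃) ∈ {−1, +1}; in particular |η₀(x₁) + η₀(x₂) + η₀(x₃)| = 1. -/
import Mathlib


open FreeGroup

abbrev W : Type := FreeGroup (Fin 2)

/-- The set of alternating words: reduced words whose letters alternate
between the two generators `a` (index 0) and `b` (index 1). -/
def Alt : Set W := {w | List.Chain' (fun p q : Fin 2 × Bool => p.1 ≠ q.1) w.toWord}

/-- The automorphism `φ_a : a ↦ a⁻¹, b ↦ b` of `F₂`. -/
def phiaF : W →* W :=
  FreeGroup.lift (fun i : Fin 2 => if i = 0 then (FreeGroup.of (0 : Fin 2))⁻¹ else FreeGroup.of 1)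

/-- The automorphism `φ_b : a ↦ a, b ↦ b⁻¹` of `F₂`. -/
def phibF : W →* W :=
  FreeGroup.lift (fun i : Fin 2 => if i = 0 then FreeGroup.of 0 else (FreeGroup.of (1 : Fin 2))⁻¹)

/-- Generating moves for the equivalence relation `∼` on triples:
rotation, inversion, and the sign-change automorphisms `φ_a`, `φ_b`. -/
def TripleBase : W × W × W → W × W × W → Prop := fun t t' =>
  t' = (t.2.1, t.2.2, t.1) ∨
  t' = ((t.2.2)⁻¹, (t.2.1)⁻¹, (t.1)⁻¹) ∨
  t' = (phiaF t.1, phiaF t.2.1, phiaF t.2.2) ∨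
  t' = (phibF t.1, phibF t.2.1, phibF t.2.2)

/-- The equivalence relation `∼` on triples of elements of `F₂`. -/
def TripleEquiv : W × W × W → W × W × W → Prop := Relation.EqvGen TripleBase

/-- Form [T1a]: `(c₁⁻¹ a b c₂, c₂⁻¹ b⁻¹ a c₃, c₃⁻¹ a⁻¹ c₁)`, all words reduced. -/
def FormT1a (y₁ y₂ y₃ : W) : Prop :=
  ∃ c₁ c₂ c₃ : W, c₁ ∈ Alt ∧ c₂ ∈ Alt ∧ c₃ ∈ Alt ∧
    y₁.toWord = (c₁⁻¹).toWord ++ [((0 : Fin 2), true), ((1 : Fin 2), true)] ++ c₂.toWord ∧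
    y₂.toWord = (c₂⁻¹).toWord ++ [((1 : Fin 2), false), ((0 : Fin 2), true)] ++ c₃.toWord ∧
    y₃.toWord = (c₃⁻¹).toWord ++ [((0 : Fin 2), false)] ++ c₁.toWord

/-- Form [T1b]: `(c₁⁻¹ b a c₂, c₂⁻¹ a⁻¹ b c₃, c₃⁻¹ b⁻¹ c₁)`, all words reduced. -/
def FormT1b (y₁ y₂ y₃ : W) : Prop :=
  ∃ c₁ c₂ c₃ : W, c₁ ∈ Alt ∧ c₂ ∈ Alt ∧ c₃ ∈ Alt ∧
    y₁.toWord = (c₁⁻¹).toWord ++ [((1 : Fin 2), true), ((0 : Fin 2), true)] ++ c₂.toWord ∧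
    y₂.toWord = (c₂⁻¹).toWord ++ [((0 : Fin 2), false), ((1 : Fin 2), true)] ++ c₃.toWord ∧
    y₃.toWord = (c₃⁻¹).toWord ++ [((1 : Fin 2), false)] ++ c₁.toWord

/-- Form [T2a]: `(c₁⁻¹ b⁻¹ a b c₂, c₂⁻¹ b⁻¹, b c₁)`, all words reduced. -/
def FormT2a (y₁ y₂ y₃ : W) : Prop :=
  ∃ c₁ c₂ : W, c₁ ∈ Alt ∧ c₂ ∈ Alt ∧
    y₁.toWord = (c₁⁻¹).toWord ++
      [((1 : Fin 2), false), ((0 : Fin 2), true), ((1 : Fin 2), true)] ++ c₂.toWord ∧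
    y₂.toWord = (c₂⁻¹).toWord ++ [((1 : Fin 2), false)] ∧
    y₃.toWord = [((1 : Fin 2), true)] ++ c₁.toWord

/-- Form [T2b]: `(c₁⁻¹ a⁻¹ b a c₂, c₂⁻¹ a⁻¹, a c₁)`, all words reduced. -/
def FormT2b (y₁ y₂ y₃ : W) : Prop :=
  ∃ c₁ c₂ : W, c₁ ∈ Alt ∧ c₂ ∈ Alt ∧
    y₁.toWord = (c₁⁻¹).toWord ++
      [((0 : Fin 2), false), ((1 : Fin 2), true), ((0 : Fin 2), true)] ++ c₂.toWord ∧
    y₂.toWord = (c₂⁻¹).toWord ++ [((0 : Fin 2), false)] ∧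
    y₃.toWord = [((0 : Fin 2), true)] ++ c₁.toWord

/-- A triple of alternating words is letter-thin if it is `∼`-equivalent to a triple
of one of the forms [T1a], [T1b], [T2a], [T2b]. -/
def LetterThin (x₁ x₂ x₃ : W) : Prop :=
  x₁ ∈ Alt ∧ x₂ ∈ Alt ∧ x₃ ∈ Alt ∧
  ∃ y₁ y₂ y₃ : W, TripleEquiv (x₁, x₂, x₃) (y₁, y₂, y₃) ∧
    (FormT1a y₁ y₂ y₃ ∨ FormT1b y₁ y₂ y₃ ∨ FormT2a y₁ y₂ y₃ ∨ FormT2b y₁ y₂ y₃)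

/-- The formal inverse of a word: reverse and flip all signs. -/
def invWord (p : List (Fin 2 × Bool)) : List (Fin 2 × Bool) :=
  (p.reverse).map fun q => (q.1, !q.2)

/-- `ν_p(g)`: the number of (possibly overlapping) occurrences of the word `p`
as a subword of the reduced word representing `g`. -/
def nuCount (p : List (Fin 2 × Bool)) (g : W) : ℕ :=
  ((List.range g.toWord.length).filter fun i => p.isPrefixOf (g.toWord.drop i)).length

/-- The Brooks quasimorphism `η_p = ν_p - ν_{p⁻¹}`. -/
def etaWord (p : List (Fin 2 × Bool)) (g : W) : ℤ :=
  (nuCount p g : ℤ) - (nuCount (invWord p) g : ℤ)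

/-- The quasimorphism `η₀ = η_{ab} - η_{ba} : F₂ → ℤ`. -/
def etaZero (g : W) : ℤ :=
  etaWord [((0 : Fin 2), true), ((1 : Fin 2), true)] g -
    etaWord [((1 : Fin 2), true), ((0 : Fin 2), true)] g

/-! ### Auxiliary machinery -/

namespace EtaAux

abbrev L2 : Type := Fin 2 × Bool

/-- flip the sign of a letter -/
def flipL (x : L2) : L2 := (x.1, !x.2)

/-- pair weight for `η₀` -/
def cw (x y : L2) : ℤ :=
  if x.1 = 0 ∧ y.1 = 1 then (if x.2 = y.2 then 1 else 0)
  else if x.1 = 1 ∧ y.1 = 0 then (if x.2 = y.2 then -1 else 0)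
  else 0

/-- pair weight for the companion quasimorphism `η₀'` -/
def cw' (x y : L2) : ℤ :=
  if x.1 = 0 ∧ y.1 = 1 then (if x.2 = y.2 then 0 else 1)
  else if x.1 = 1 ∧ y.1 = 0 then (if x.2 = y.2 then 0 else -1)
  else 0

def pairSum (f : L2 → L2 → ℤ) (l : List L2) : ℤ :=
  ((l.zip l.tail).map fun p => f p.1 p.2).sum

@[simp] lemma pairSum_nil (f : L2 → L2 → ℤ) : pairSum f [] = 0 := rfl
@[simp] lemma pairSum_singleton (f : L2 → L2 → ℤ) (x : L2) : pairSum f [x] = 0 := rfl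
lemma pairSum_cons2 (f : L2 → L2 → ℤ) (x y : L2) (l : List L2) :
    pairSum f (x :: y :: l) = f x y + pairSum f (y :: l) := by
  simp [pairSum]

/-- junction weight -/
def junc (f : L2 → L2 → ℤ) : Option L2 → Option L2 → ℤ
  | some x, some y => f x y
  | _, _ => 0

@[simp] lemma junc_none_left (f) (o : Option L2) : junc f none o = 0 := by cases o <;> rfl
@[simp] lemma junc_none_right (f) (o : Option L2) : junc f o none = 0 := by cases o <;> rfl
@[simp] lemma junc_some_some (f) (x y : L2) : junc f (some x) (some y) = f x y := rfl

lemma pairSum_append (f : L2 → L2 → ℤ) (l₁ l₂ : List L2) :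
    pairSum f (l₁ ++ l₂) = pairSum f l₁ + junc f l₁.getLast? l₂.head? + pairSum f l₂ := by
  induction l₁ with
  | nil => simp
  | cons x l₁ ih =>
    cases l₁ with
    | nil =>
      cases l₂ with
      | nil => simp
      | cons y t => simp [pairSum_cons2]
    | cons y t =>
      rw [List.cons_append, List.cons_append, pairSum_cons2, ← List.cons_append, ih,
        pairSum_cons2]
      rw [List.getLast?_cons_cons]
      ring

lemma pairSum_map (f : L2 → L2 → ℤ) (m : L2 → L2) (l : List L2) :
    pairSum f (l.map m) = pairSum (fun x y => f (m x) (m y)) l := by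
  unfold pairSum
  rw [← List.map_tail, List.zip_map, List.map_map]
  rfl

lemma pairSum_reverse (f : L2 → L2 → ℤ) (l : List L2) :
    pairSum f l.reverse = pairSum (fun x y => f y x) l := by
  induction l with
  | nil => rfl
  | cons x l ih =>
    rw [List.reverse_cons, pairSum_append, ih]
    cases l with
    | nil => simp
    | cons y t =>
      rw [pairSum_cons2]
      simp [List.getLast?_reverse]
      ring

lemma pairSum_congr {f g : L2 → L2 → ℤ} (h : ∀ x y, f x y = g x y) (l : List L2) :
    pairSum f l = pairSum g l := by
  have : f = g := funext fun x => funext fun y => h x y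
  rw [this]

lemma pairSum_neg (f : L2 → L2 → ℤ) (l : List L2) :
    pairSum (fun x y => -f x y) l = -pairSum f l := by
  unfold pairSum
  induction (l.zip l.tail) with
  | nil => simp
  | cons p Z ih => simp [ih]; ring

/-- `invRev` in terms of `pairSum`, for weights satisfying the antisymmetry. -/
lemma pairSum_invRev {f : L2 → L2 → ℤ} (hf : ∀ x y, f (flipL y) (flipL x) = -f x y)
    (l : List L2) : pairSum f (FreeGroup.invRev l) = -pairSum f l := by
  unfold FreeGroup.invRev
  rw [pairSum_reverse, pairSum_map]
  exact (pairSum_congr (fun x y => hf x y) l).trans (pairSum_neg f l)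

lemma cw_anti : ∀ x y : L2, cw (flipL y) (flipL x) = -cw x y := by decide
lemma cw'_anti : ∀ x y : L2, cw' (flipL y) (flipL x) = -cw' x y := by decide

/-! ### Counting occurrences -/

lemma isPrefixOf_pair (u v x y : L2) (t : List L2) :
    ([u, v].isPrefixOf (x :: y :: t)) = decide ((x, y) = (u, v)) := by
  have h : ∀ u v x y : L2, (u == x && (v == y && true)) = decide ((x, y) = (u, v)) := by decide
  rw [List.isPrefixOf_cons₂, List.isPrefixOf_cons₂, List.isPrefixOf_nil_left]
  exact h u v x y

lemma count_pair (u v : L2) (l : List L2) :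
    ((List.range l.length).filter fun i => [u, v].isPrefixOf (l.drop i)).length
      = (l.zip l.tail).countP fun p => decide (p = (u, v)) := by
  induction l with
  | nil => rfl
  | cons x l ih =>
    rw [List.length_cons, List.range_succ_eq_map, List.filter_cons, List.filter_map]
    have hdrop : ∀ i : ℕ, (x :: l).drop (i + 1) = l.drop i := fun i => rfl
    have : (List.filter ((fun i => [u, v].isPrefixOf ((x :: l).drop i)) ∘ Nat.succ)
        (List.range l.length)) =
        (List.filter (fun i => [u, v].isPrefixOf (l.drop i)) (List.range l.length)) := by
      apply List.filter_congr
      intro i _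
      simp [Function.comp, hdrop]
    rw [this]
    cases l with
    | nil => simp [List.isPrefixOf]
    | cons y t =>
      simp only [List.drop_zero, List.tail_cons, List.zip_cons_cons, List.countP_cons]
      simp only [isPrefixOf_pair]
      rcases h : decide ((x, y) = (u, v)) <;>
        simp [h] <;> simpa [Nat.add_comm] using ih

lemma nuCount_pair (u v : L2) (g : W) :
    (nuCount [u, v] g : ℤ)
      = ((g.toWord.zip g.toWord.tail).countP fun p => decide (p = (u, v)) : ℕ) := by
  rw [nuCount, count_pair]

lemma countP_comb (Z : List (L2 × L2)) :
    ((Z.countP fun p => decide (p = (((0 : Fin 2), true), ((1 : Fin 2), true)))) : ℤ)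
      - (Z.countP fun p => decide (p = (((1 : Fin 2), false), ((0 : Fin 2), false))))
      - (Z.countP fun p => decide (p = (((1 : Fin 2), true), ((0 : Fin 2), true))))
      + (Z.countP fun p => decide (p = (((0 : Fin 2), false), ((1 : Fin 2), false))))
      = (Z.map fun p => cw p.1 p.2).sum := by
  induction Z with
  | nil => rfl
  | cons p Z ih =>
    rw [List.countP_cons, List.countP_cons, List.countP_cons, List.countP_cons, List.map_cons,
      List.sum_cons]
    push_cast
    rw [← ih]
    have : ((if decide (p = (((0 : Fin 2), true), ((1 : Fin 2), true))) = true then (1:ℤ) else 0)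
      - (if decide (p = (((1 : Fin 2), false), ((0 : Fin 2), false))) = true then (1:ℤ) else 0)
      - (if decide (p = (((1 : Fin 2), true), ((0 : Fin 2), true))) = true then (1:ℤ) else 0)
      + (if decide (p = (((0 : Fin 2), false), ((1 : Fin 2), false))) = true then (1:ℤ) else 0))
      = cw p.1 p.2 := by revert p; decide
    linarith [this]

lemma etaZero_eq_pairSum (g : W) : etaZero g = pairSum cw g.toWord := by
  have h1 : invWord [((0 : Fin 2), true), ((1 : Fin 2), true)]
      = [((1 : Fin 2), false), ((0 : Fin 2), false)] := rfl
  have h2 : invWord [((1 : Fin 2), true), ((0 : Fin 2), true)]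
      = [((0 : Fin 2), false), ((1 : Fin 2), false)] := rfl
  have hc := countP_comb (g.toWord.zip g.toWord.tail)
  rw [etaZero, etaWord, etaWord, h1, h2,
    nuCount_pair, nuCount_pair, nuCount_pair, nuCount_pair]
  unfold pairSum
  push_cast at hc ⊢
  linarith [hc]

/-- the companion of `etaZero` -/
def etaZero' (g : W) : ℤ := pairSum cw' g.toWord

lemma etaZero_inv (g : W) : etaZero g⁻¹ = -etaZero g := by
  rw [etaZero_eq_pairSum, etaZero_eq_pairSum, FreeGroup.toWord_inv, pairSum_invRev cw_anti]

lemma etaZero'_inv (g : W) : etaZero' g⁻¹ = -etaZero' g := by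
  rw [etaZero', etaZero', FreeGroup.toWord_inv, pairSum_invRev cw'_anti]

/-! ### The automorphisms on words -/

def ma (x : L2) : L2 := if x.1 = 0 then (x.1, !x.2) else x
def mb (x : L2) : L2 := if x.1 = 1 then (x.1, !x.2) else x

lemma ma_cancel : ∀ x y : L2,
    (((ma x).1 = (ma y).1 ∧ (ma x).2 = !(ma y).2) ↔ (x.1 = y.1 ∧ x.2 = !y.2)) := by decide
lemma mb_cancel : ∀ x y : L2,
    (((mb x).1 = (mb y).1 ∧ (mb x).2 = !(mb y).2) ↔ (x.1 = y.1 ∧ x.2 = !y.2)) := by decide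

lemma reduce_map {m : L2 → L2}
    (hm : ∀ x y : L2, (((m x).1 = (m y).1 ∧ (m x).2 = !(m y).2) ↔ (x.1 = y.1 ∧ x.2 = !y.2)))
    (l : List L2) : FreeGroup.reduce (l.map m) = (FreeGroup.reduce l).map m := by
  induction l with
  | nil => rfl
  | cons x l ih =>
    rw [List.map_cons, FreeGroup.reduce.cons, FreeGroup.reduce.cons, ih]
    cases h : FreeGroup.reduce l with
    | nil => rfl
    | cons y t =>
      rw [List.map_cons]
      show (if (m x).1 = (m y).1 ∧ (m x).2 = !(m y).2 then t.map m
          else m x :: m y :: t.map m)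
        = (if x.1 = y.1 ∧ x.2 = !y.2 then t else x :: y :: t).map m
      by_cases hc : x.1 = y.1 ∧ x.2 = !y.2
      · rw [if_pos ((hm x y).mpr hc), if_pos hc]
      · rw [if_neg (fun hc' => hc ((hm x y).mp hc')), if_neg hc, List.map_cons, List.map_cons]

lemma phiaF_mk_single : ∀ x : L2, phiaF (FreeGroup.mk [x]) = FreeGroup.mk [ma x] := by
  rintro ⟨i, b⟩
  have h1 : ∀ i : Fin 2, FreeGroup.mk [(i, true)] = FreeGroup.of i := fun _ => rfl
  have h2 : ∀ i : Fin 2, FreeGroup.mk [(i, false)] = (FreeGroup.of i)⁻¹ := fun _ => rfl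
  fin_cases i <;> cases b <;>
    simp [h1, h2, ma, phiaF, FreeGroup.lift_apply_of]

lemma phibF_mk_single : ∀ x : L2, phibF (FreeGroup.mk [x]) = FreeGroup.mk [mb x] := by
  rintro ⟨i, b⟩
  have h1 : ∀ i : Fin 2, FreeGroup.mk [(i, true)] = FreeGroup.of i := fun _ => rfl
  have h2 : ∀ i : Fin 2, FreeGroup.mk [(i, false)] = (FreeGroup.of i)⁻¹ := fun _ => rfl
  fin_cases i <;> cases b <;>
    simp [h1, h2, mb, phibF, FreeGroup.lift_apply_of]

lemma phiaF_mk (l : List L2) : phiaF (FreeGroup.mk l) = FreeGroup.mk (l.map ma) := by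
  induction l with
  | nil => rw [← FreeGroup.one_eq_mk, MonoidHom.map_one phiaF, List.map_nil, ← FreeGroup.one_eq_mk]
  | cons x l ih =>
    rw [show (x :: l) = [x] ++ l from rfl, ← FreeGroup.mul_mk, MonoidHom.map_mul phiaF, ih, phiaF_mk_single,
      FreeGroup.mul_mk, List.map_append]
    rfl

lemma phibF_mk (l : List L2) : phibF (FreeGroup.mk l) = FreeGroup.mk (l.map mb) := by
  induction l with
  | nil => rw [← FreeGroup.one_eq_mk, MonoidHom.map_one phibF, List.map_nil, ← FreeGroup.one_eq_mk]
  | cons x l ih =>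
    rw [show (x :: l) = [x] ++ l from rfl, ← FreeGroup.mul_mk, MonoidHom.map_mul phibF, ih, phibF_mk_single,
      FreeGroup.mul_mk, List.map_append]
    rfl

lemma toWord_phiaF (g : W) : (phiaF g).toWord = g.toWord.map ma := by
  conv_lhs => rw [← FreeGroup.mk_toWord (x := g)]
  rw [phiaF_mk, FreeGroup.toWord_mk, reduce_map ma_cancel, FreeGroup.reduce_toWord]

lemma toWord_phibF (g : W) : (phibF g).toWord = g.toWord.map mb := by
  conv_lhs => rw [← FreeGroup.mk_toWord (x := g)]
  rw [phibF_mk, FreeGroup.toWord_mk, reduce_map mb_cancel, FreeGroup.reduce_toWord]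

lemma cw_ma : ∀ x y : L2, cw (ma x) (ma y) = cw' x y := by decide
lemma cw'_ma : ∀ x y : L2, cw' (ma x) (ma y) = cw x y := by decide
lemma cw_mb : ∀ x y : L2, cw (mb x) (mb y) = cw' x y := by decide
lemma cw'_mb : ∀ x y : L2, cw' (mb x) (mb y) = cw x y := by decide

lemma etaZero_phiaF (g : W) : etaZero (phiaF g) = etaZero' g := by
  rw [etaZero_eq_pairSum, toWord_phiaF, pairSum_map, etaZero']
  exact pairSum_congr cw_ma _

lemma etaZero'_phiaF (g : W) : etaZero' (phiaF g) = etaZero g := by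
  rw [etaZero', toWord_phiaF, pairSum_map, etaZero_eq_pairSum]
  exact pairSum_congr cw'_ma _

lemma etaZero_phibF (g : W) : etaZero (phibF g) = etaZero' g := by
  rw [etaZero_eq_pairSum, toWord_phibF, pairSum_map, etaZero']
  exact pairSum_congr cw_mb _

lemma etaZero'_phibF (g : W) : etaZero' (phibF g) = etaZero g := by
  rw [etaZero', toWord_phibF, pairSum_map, etaZero_eq_pairSum]
  exact pairSum_congr cw'_mb _

/-! ### The invariant -/

def S (t : W × W × W) : ℤ := etaZero t.1 + etaZero t.2.1 + etaZero t.2.2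
def S' (t : W × W × W) : ℤ := etaZero' t.1 + etaZero' t.2.1 + etaZero' t.2.2
def Good (t : W × W × W) : Prop := (S t = 1 ∧ S' t = -1) ∨ (S t = -1 ∧ S' t = 1)

lemma good_base {t t' : W × W × W} (h : TripleBase t t') : Good t ↔ Good t' := by
  obtain ⟨x1, x2, x3⟩ := t
  rcases h with h | h | h | h <;> subst h <;> unfold Good S S'
  · dsimp only; omega
  · dsimp only; rw [etaZero_inv, etaZero_inv, etaZero_inv, etaZero'_inv, etaZero'_inv,
      etaZero'_inv]; omega
  · dsimp only; rw [etaZero_phiaF, etaZero_phiaF, etaZero_phiaF, etaZero'_phiaF, etaZero'_phiaF,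
      etaZero'_phiaF]; omega
  · dsimp only; rw [etaZero_phibF, etaZero_phibF, etaZero_phibF, etaZero'_phibF, etaZero'_phibF,
      etaZero'_phibF]; omega

lemma good_equiv {t t' : W × W × W} (h : TripleEquiv t t') : Good t ↔ Good t' := by
  induction h with
  | rel _ _ hb => exact good_base hb
  | refl _ => exact Iff.rfl
  | symm _ _ _ ih => exact ih.symm
  | trans _ _ _ _ _ ih1 ih2 => exact ih1.trans ih2

/-! ### Computation on the normal forms -/

lemma getLast?_invRev (w : List L2) :
    (FreeGroup.invRev w).getLast? = w.head?.map flipL := by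
  unfold FreeGroup.invRev
  rw [List.getLast?_reverse, List.head?_map]
  rfl

lemma pairSum_block {f : L2 → L2 → ℤ} (hf : ∀ x y, f (flipL y) (flipL x) = -f x y)
    (w : List L2) (a : L2) (m w' : List L2) :
    pairSum f (FreeGroup.invRev w ++ (a :: m) ++ w') =
      -pairSum f w + junc f (w.head?.map flipL) (some a) + pairSum f (a :: m)
        + junc f ((a :: m).getLast?) w'.head? + pairSum f w' := by
  rw [List.append_assoc, pairSum_append, pairSum_append, pairSum_invRev hf, getLast?_invRev]
  simp only [List.cons_append, List.head?_cons]
  ring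

lemma junc_cancel {f : L2 → L2 → ℤ} (hf : ∀ x y, f (flipL y) (flipL x) = -f x y)
    (g : L2) (o : Option L2) :
    junc f (o.map flipL) (some g) + junc f (some (flipL g)) o = 0 := by
  cases o with
  | none => simp
  | some x =>
    simp only [Option.map_some, junc_some_some]
    have h := hf (flipL g) x
    have hg : flipL (flipL g) = g := by simp [flipL]
    rw [hg] at h
    linarith

lemma sum_T1a {f : L2 → L2 → ℤ} (hf : ∀ x y, f (flipL y) (flipL x) = -f x y)
    (w1 w2 w3 : List L2) :
    pairSum f (FreeGroup.invRev w1 ++ [((0:Fin 2), true), ((1:Fin 2), true)] ++ w2)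
      + pairSum f (FreeGroup.invRev w2 ++ [((1:Fin 2), false), ((0:Fin 2), true)] ++ w3)
      + pairSum f (FreeGroup.invRev w3 ++ [((0:Fin 2), false)] ++ w1)
    = f ((0:Fin 2), true) ((1:Fin 2), true) + f ((1:Fin 2), false) ((0:Fin 2), true) := by
  rw [pairSum_block hf, pairSum_block hf, pairSum_block hf]
  have j1 := junc_cancel hf ((0:Fin 2), true) w1.head?
  have j2 := junc_cancel hf ((1:Fin 2), false) w2.head?
  have j3 := junc_cancel hf ((0:Fin 2), false) w3.head?
  rw [show flipL ((0:Fin 2), true) = ((0:Fin 2), false) from rfl] at j1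
  rw [show flipL ((1:Fin 2), false) = ((1:Fin 2), true) from rfl] at j2
  rw [show flipL ((0:Fin 2), false) = ((0:Fin 2), true) from rfl] at j3
  simp only [pairSum_cons2, pairSum_singleton, List.getLast?_cons_cons, List.getLast?_singleton]
  linarith

lemma sum_T1b {f : L2 → L2 → ℤ} (hf : ∀ x y, f (flipL y) (flipL x) = -f x y)
    (w1 w2 w3 : List L2) :
    pairSum f (FreeGroup.invRev w1 ++ [((1:Fin 2), true), ((0:Fin 2), true)] ++ w2)
      + pairSum f (FreeGroup.invRev w2 ++ [((0:Fin 2), false), ((1:Fin 2), true)] ++ w3)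
      + pairSum f (FreeGroup.invRev w3 ++ [((1:Fin 2), false)] ++ w1)
    = f ((1:Fin 2), true) ((0:Fin 2), true) + f ((0:Fin 2), false) ((1:Fin 2), true) := by
  rw [pairSum_block hf, pairSum_block hf, pairSum_block hf]
  have j1 := junc_cancel hf ((1:Fin 2), true) w1.head?
  have j2 := junc_cancel hf ((0:Fin 2), false) w2.head?
  have j3 := junc_cancel hf ((1:Fin 2), false) w3.head?
  rw [show flipL ((1:Fin 2), true) = ((1:Fin 2), false) from rfl] at j1
  rw [show flipL ((0:Fin 2), false) = ((0:Fin 2), true) from rfl] at j2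
  rw [show flipL ((1:Fin 2), false) = ((1:Fin 2), true) from rfl] at j3
  simp only [pairSum_cons2, pairSum_singleton, List.getLast?_cons_cons, List.getLast?_singleton]
  linarith

lemma sum_T2a {f : L2 → L2 → ℤ} (hf : ∀ x y, f (flipL y) (flipL x) = -f x y)
    (w1 w2 : List L2) :
    pairSum f (FreeGroup.invRev w1
        ++ [((1:Fin 2), false), ((0:Fin 2), true), ((1:Fin 2), true)] ++ w2)
      + pairSum f (FreeGroup.invRev w2 ++ [((1:Fin 2), false)])
      + pairSum f ([((1:Fin 2), true)] ++ w1)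
    = f ((1:Fin 2), false) ((0:Fin 2), true) + f ((0:Fin 2), true) ((1:Fin 2), true) := by
  rw [pairSum_block hf, pairSum_append, pairSum_append, pairSum_invRev hf, getLast?_invRev]
  have j1 := junc_cancel hf ((1:Fin 2), false) w1.head?
  have j2 := junc_cancel hf ((1:Fin 2), false) w2.head?
  rw [show flipL ((1:Fin 2), false) = ((1:Fin 2), true) from rfl] at j1 j2
  simp only [pairSum_cons2, pairSum_singleton, pairSum_nil, List.getLast?_cons_cons,
    List.getLast?_singleton, List.head?_cons]
  linarith

lemma sum_T2b {f : L2 → L2 → ℤ} (hf : ∀ x y, f (flipL y) (flipL x) = -f x y)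
    (w1 w2 : List L2) :
    pairSum f (FreeGroup.invRev w1
        ++ [((0:Fin 2), false), ((1:Fin 2), true), ((0:Fin 2), true)] ++ w2)
      + pairSum f (FreeGroup.invRev w2 ++ [((0:Fin 2), false)])
      + pairSum f ([((0:Fin 2), true)] ++ w1)
    = f ((0:Fin 2), false) ((1:Fin 2), true) + f ((1:Fin 2), true) ((0:Fin 2), true) := by
  rw [pairSum_block hf, pairSum_append, pairSum_append, pairSum_invRev hf, getLast?_invRev]
  have j1 := junc_cancel hf ((0:Fin 2), false) w1.head?
  have j2 := junc_cancel hf ((0:Fin 2), false) w2.head?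
  rw [show flipL ((0:Fin 2), false) = ((0:Fin 2), true) from rfl] at j1 j2
  simp only [pairSum_cons2, pairSum_singleton, pairSum_nil, List.getLast?_cons_cons,
    List.getLast?_singleton, List.head?_cons]
  linarith

lemma good_T1a {y₁ y₂ y₃ : W} (h : FormT1a y₁ y₂ y₃) : Good (y₁, y₂, y₃) := by
  obtain ⟨c₁, c₂, c₃, -, -, -, h1, h2, h3⟩ := h
  rw [FreeGroup.toWord_inv] at h1 h2 h3
  left
  constructor
  · show etaZero y₁ + etaZero y₂ + etaZero y₃ = 1
    rw [etaZero_eq_pairSum, etaZero_eq_pairSum, etaZero_eq_pairSum, h1, h2, h3,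
      sum_T1a cw_anti]
    decide
  · show etaZero' y₁ + etaZero' y₂ + etaZero' y₃ = -1
    rw [etaZero', etaZero', etaZero', h1, h2, h3, sum_T1a cw'_anti]
    decide

lemma good_T1b {y₁ y₂ y₃ : W} (h : FormT1b y₁ y₂ y₃) : Good (y₁, y₂, y₃) := by
  obtain ⟨c₁, c₂, c₃, -, -, -, h1, h2, h3⟩ := h
  rw [FreeGroup.toWord_inv] at h1 h2 h3
  right
  constructor
  · show etaZero y₁ + etaZero y₂ + etaZero y₃ = -1
    rw [etaZero_eq_pairSum, etaZero_eq_pairSum, etaZero_eq_pairSum, h1, h2, h3,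
      sum_T1b cw_anti]
    decide
  · show etaZero' y₁ + etaZero' y₂ + etaZero' y₃ = 1
    rw [etaZero', etaZero', etaZero', h1, h2, h3, sum_T1b cw'_anti]
    decide

lemma good_T2a {y₁ y₂ y₃ : W} (h : FormT2a y₁ y₂ y₃) : Good (y₁, y₂, y₃) := by
  obtain ⟨c₁, c₂, -, -, h1, h2, h3⟩ := h
  rw [FreeGroup.toWord_inv] at h1 h2
  left
  constructor
  · show etaZero y₁ + etaZero y₂ + etaZero y₃ = 1
    rw [etaZero_eq_pairSum, etaZero_eq_pairSum, etaZero_eq_pairSum, h1, h2, h3,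
      sum_T2a cw_anti]
    decide
  · show etaZero' y₁ + etaZero' y₂ + etaZero' y₃ = -1
    rw [etaZero', etaZero', etaZero', h1, h2, h3, sum_T2a cw'_anti]
    decide

lemma good_T2b {y₁ y₂ y₃ : W} (h : FormT2b y₁ y₂ y₃) : Good (y₁, y₂, y₃) := by
  obtain ⟨c₁, c₂, -, -, h1, h2, h3⟩ := h
  rw [FreeGroup.toWord_inv] at h1 h2
  right
  constructor
  · show etaZero y₁ + etaZero y₂ + etaZero y₃ = -1
    rw [etaZero_eq_pairSum, etaZero_eq_pairSum, etaZero_eq_pairSum, h1, h2, h3,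
      sum_T2b cw_anti]
    decide
  · show etaZero' y₁ + etaZero' y₂ + etaZero' y₃ = 1
    rw [etaZero', etaZero', etaZero', h1, h2, h3, sum_T2b cw'_anti]
    decide

end EtaAux


/-- **Proposition.** For every letter-thin triple `(x₁,x₂,x₃)` we have
`η₀(x₁) + η₀(x₂) + η₀(x₃) ∈ {-1, +1}`. -/
theorem etaZero_letterThin (x₁ x₂ x₃ : W) (h : LetterThin x₁ x₂ x₃) :
    etaZero x₁ + etaZero x₂ + etaZero x₃ = 1 ∨
    etaZero x₁ + etaZero x₂ + etaZero x₃ = -1 := by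
  obtain ⟨-, -, -, y₁, y₂, y₃, heq, hform⟩ := h
  have hg : EtaAux.Good (y₁, y₂, y₃) := by
    rcases hform with hf | hf | hf | hf
    exacts [EtaAux.good_T1a hf, EtaAux.good_T1b hf, EtaAux.good_T2a hf, EtaAux.good_T2b hf]
  have hx : EtaAux.Good (x₁, x₂, x₃) := (EtaAux.good_equiv heq).mpr hg
  rcases hx with ⟨h1, -⟩ | ⟨h1, -⟩
  · exact Or.inl h1
  · exact Or.inr h1
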